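/- Let π denote the prime counting function and r > 1 a real, x > 0. Then C_r(x) = −Σ_{p ≤ √x} π(p) + Σ_{p ≤ √(x/r)} π(r*p) + Σ_{√(x/r) < p ≤ √x} π(x/p), where C_r(x) counts integers n ≤ x of the form n = p*q with p, q prime and p < q ≤ r*p, and all sums range over primes p. -/
import Mathlib


/-- `pi y` is the number of primes `p ≤ y`. -/
noncomputable def pi (y : ℝ) : ℕ := ((Finset.range (⌊y⌋₊ + 1)).filter Nat.Prime).card

/-- `C r x` is the number of integers `n ≤ x` of the form `n = p*q`
with `p, q` primes and `p < q ≤ r*p`. -/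
noncomputable def C (r x : ℝ) : ℕ :=
  {n : ℕ | (n : ℝ) ≤ x ∧ ∃ p q : ℕ, p.Prime ∧ q.Prime ∧ p < q ∧
      (q : ℝ) ≤ r * p ∧ n = p * q}.ncard

lemma pi_split (p : ℕ) (y : ℝ) (h : (p:ℝ) ≤ y) :
    pi y = pi p + ((Finset.range (⌊y⌋₊+1)).filter (fun q => q.Prime ∧ p < q)).card := by
  classical
  have hp : p ≤ ⌊y⌋₊ := Nat.le_floor h
  have key := Finset.card_filter_add_card_filter_not
    (s := (Finset.range (⌊y⌋₊+1)).filter Nat.Prime) (p := fun q => p < q)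
  have h1 : ((Finset.range (⌊y⌋₊+1)).filter Nat.Prime).filter (fun q => p < q)
      = (Finset.range (⌊y⌋₊+1)).filter (fun q => q.Prime ∧ p < q) := by
    rw [Finset.filter_filter]
  have h2 : ((Finset.range (⌊y⌋₊+1)).filter Nat.Prime).filter (fun q => ¬ p < q)
      = (Finset.range (p+1)).filter Nat.Prime := by
    ext q
    simp only [Finset.mem_filter, Finset.mem_range, Nat.lt_succ_iff, not_lt]
    constructor
    · rintro ⟨⟨_, hq⟩, hle⟩; exact ⟨hle, hq⟩
    · rintro ⟨hle, hq⟩; exact ⟨⟨le_trans hle hp, hq⟩, hle⟩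
  rw [h1, h2] at key
  rw [pi, pi, Nat.floor_natCast, ← key]; omega

lemma two_prime_factor_unique {p q p' q' : ℕ} (hp : p.Prime) (hq : q.Prime)
    (hp' : p'.Prime) (hq' : q'.Prime) (h1 : p < q) (h2 : p' < q')
    (h : p * q = p' * q') : p = p' ∧ q = q' := by
  have hd : p ∣ p' * q' := h ▸ dvd_mul_right p q
  rcases (Nat.Prime.dvd_mul hp).mp hd with h3 | h3
  · have hpp : p = p' := (Nat.prime_dvd_prime_iff_eq hp hp').mp h3
    subst hpp
    exact ⟨rfl, Nat.eq_of_mul_eq_mul_left hp.pos h⟩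
  · have hpq : p = q' := (Nat.prime_dvd_prime_iff_eq hp hq').mp h3
    have hd' : p' ∣ p * q := h ▸ dvd_mul_right p' q'
    rcases (Nat.Prime.dvd_mul hp').mp hd' with h4 | h4
    · have : p' = p := (Nat.prime_dvd_prime_iff_eq hp' hp).mp h4
      omega
    · have : p' = q := (Nat.prime_dvd_prime_iff_eq hp' hq).mp h4
      omega

theorem stmt_7 (x r : ℝ) (hx : 0 < x) (hr : 1 < r) (hrx : r ≤ x) :
    (C r x : ℝ) =
      -(∑ p ∈ (Finset.range (⌊Real.sqrt x⌋₊ + 1)).filter Nat.Prime, (pi (p : ℝ) : ℝ))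
      + ∑ p ∈ (Finset.range (⌊Real.sqrt (x / r)⌋₊ + 1)).filter Nat.Prime, (pi (r * p) : ℝ)
      + ∑ p ∈ ((Finset.range (⌊Real.sqrt x⌋₊ + 1)).filter
          (fun p => Nat.Prime p ∧ Real.sqrt (x / r) < (p : ℝ))), (pi (x / p) : ℝ) := by
  classical
  set P : Finset ℕ := (Finset.range (⌊Real.sqrt x⌋₊ + 1)).filter Nat.Prime with hPdef
  set Q : ℕ → Finset ℕ := fun p =>
    (Finset.range (⌊min (r*(p:ℝ)) (x/(p:ℝ))⌋₊+1)).filter (fun q => q.Prime ∧ p < q) with hQdef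
  have hsq : Real.sqrt x * Real.sqrt x = x := Real.mul_self_sqrt hx.le
  have hPmem : ∀ p ∈ P, p.Prime ∧ (p:ℝ) ≤ Real.sqrt x := by
    intro p hp
    simp only [hPdef, Finset.mem_filter, Finset.mem_range, Nat.lt_succ_iff] at hp
    exact ⟨hp.2, (Nat.le_floor_iff (Real.sqrt_nonneg x)).mp hp.1⟩
  -- the set equals a biUnion
  have hSeq : {n : ℕ | (n : ℝ) ≤ x ∧ ∃ p q : ℕ, p.Prime ∧ q.Prime ∧ p < q ∧
      (q : ℝ) ≤ r * p ∧ n = p * q}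
      = ↑(P.biUnion (fun p => (Q p).image (fun q => p * q))) := by
    ext n
    simp only [Set.mem_setOf_eq, Finset.coe_biUnion, Set.mem_iUnion, Finset.mem_coe,
      Finset.mem_image]
    constructor
    · rintro ⟨hn, p, q, hp, hq, hlt, hqr, rfl⟩
      have hppos : (0:ℝ) < p := by exact_mod_cast hp.pos
      have hpq : (p:ℝ) * q ≤ x := by push_cast at hn; linarith
      have hqlt : (p:ℝ) < q := by exact_mod_cast hlt
      have hp2 : (p:ℝ) * p ≤ x := by nlinarith
      have hpsqrt : (p:ℝ) ≤ Real.sqrt x := by nlinarith [Real.sqrt_nonneg x]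
      refine ⟨p, ?_, q, ?_, rfl⟩
      · simp only [hPdef, Finset.mem_filter, Finset.mem_range, Nat.lt_succ_iff]
        exact ⟨Nat.le_floor hpsqrt, hp⟩
      · simp only [hQdef, Finset.mem_filter, Finset.mem_range, Nat.lt_succ_iff]
        refine ⟨Nat.le_floor (le_min hqr ?_), hq, hlt⟩
        rw [le_div_iff₀ hppos]; nlinarith
    · rintro ⟨p, hpP, q, hqQ, rfl⟩
      obtain ⟨hp, hpx⟩ := hPmem p hpP
      have hppos : (0:ℝ) < p := by exact_mod_cast hp.pos
      simp only [hQdef, Finset.mem_filter, Finset.mem_range, Nat.lt_succ_iff] at hqQ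
      obtain ⟨hqle, hq, hlt⟩ := hqQ
      have hmin0 : (0:ℝ) ≤ min (r*(p:ℝ)) (x/(p:ℝ)) :=
        le_min (by positivity) (by positivity)
      have hqr : (q:ℝ) ≤ min (r*(p:ℝ)) (x/(p:ℝ)) := (Nat.le_floor_iff hmin0).mp hqle
      refine ⟨?_, p, q, hp, hq, hlt, le_trans hqr (min_le_left _ _), rfl⟩
      have h2 : (q:ℝ) ≤ x/(p:ℝ) := le_trans hqr (min_le_right _ _)
      push_cast
      calc (p:ℝ)*q ≤ p*(x/p) := by nlinarith
        _ = x := by field_simp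
  -- C as a sum of cards
  have hC : C r x = ∑ p ∈ P, (Q p).card := by
    rw [C, hSeq, Set.ncard_coe_finset, Finset.card_biUnion]
    · exact Finset.sum_congr rfl fun p hp =>
        Finset.card_image_of_injective _ (fun a b h => Nat.eq_of_mul_eq_mul_left (hPmem p hp).1.pos h)
    · intro p hp p' hp' hne
      simp only [Finset.disjoint_left, Finset.mem_image]
      rintro n ⟨q, hq, rfl⟩ ⟨q', hq', he⟩
      simp only [hQdef, Finset.mem_filter] at hq hq'
      exact hne (two_prime_factor_unique (hPmem p hp).1 hq.2.1 (hPmem p' hp').1 hq'.2.1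
        hq.2.2 hq'.2.2 he.symm).1
  -- per-p card
  have hcard : ∀ p ∈ P, ((Q p).card : ℝ) = (pi (min (r*(p:ℝ)) (x/(p:ℝ))) : ℝ) - pi (p:ℝ) := by
    intro p hp
    obtain ⟨hpp, hpx⟩ := hPmem p hp
    have hppos : (0:ℝ) < p := by exact_mod_cast hpp.pos
    have hp2 : (p:ℝ) * p ≤ x := by nlinarith [Real.sqrt_nonneg x]
    have hple : (p:ℝ) ≤ min (r*(p:ℝ)) (x/(p:ℝ)) := by
      refine le_min (by nlinarith) ?_
      rw [le_div_iff₀ hppos]; linarith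
    have hkey := pi_split p _ hple
    rw [hQdef]
    rw [hkey]
    push_cast
    ring
  have hcast : (C r x : ℝ) = ∑ p ∈ P, ((pi (min (r*(p:ℝ)) (x/(p:ℝ))) : ℝ) - pi (p:ℝ)) := by
    rw [hC]
    push_cast
    exact Finset.sum_congr rfl hcard
  rw [hcast, Finset.sum_sub_distrib]
  -- split the min-sum
  have hsplit := Finset.sum_filter_add_sum_filter_not P (fun p : ℕ => (p:ℝ) ≤ Real.sqrt (x/r))
    (f := fun p => ((pi (min (r*(p:ℝ)) (x/(p:ℝ))) : ℝ)))
  have hrpos : (0:ℝ) < r := lt_trans one_pos hr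
  have hsq2 : Real.sqrt (x/r) * Real.sqrt (x/r) = x/r := Real.mul_self_sqrt (by positivity)
  have hle1 : ∀ p ∈ P.filter (fun p : ℕ => (p:ℝ) ≤ Real.sqrt (x/r)),
      (pi (min (r*(p:ℝ)) (x/(p:ℝ))) : ℝ) = (pi (r*(p:ℝ)) : ℝ) := by
    intro p hp
    simp only [Finset.mem_filter] at hp
    obtain ⟨hpP, hps⟩ := hp
    have hppos : (0:ℝ) < p := by exact_mod_cast (hPmem p hpP).1.pos
    have hp2 : (p:ℝ) * p ≤ x/r := by nlinarith [Real.sqrt_nonneg (x/r)]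
    have : r*(p:ℝ) ≤ x/(p:ℝ) := by
      rw [le_div_iff₀ hppos]
      calc r*(p:ℝ)*p = r*((p:ℝ)*p) := by ring
        _ ≤ r*(x/r) := by nlinarith
        _ = x := by field_simp
    rw [min_eq_left this]
  have hle2 : ∀ p ∈ P.filter (fun p : ℕ => ¬ (p:ℝ) ≤ Real.sqrt (x/r)),
      (pi (min (r*(p:ℝ)) (x/(p:ℝ))) : ℝ) = (pi (x/(p:ℝ)) : ℝ) := by
    intro p hp
    simp only [Finset.mem_filter, not_le] at hp
    obtain ⟨hpP, hps⟩ := hp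
    have hppos : (0:ℝ) < p := by exact_mod_cast (hPmem p hpP).1.pos
    have hp2 : x/r < (p:ℝ) * p := by nlinarith [Real.sqrt_nonneg (x/r)]
    have : x/(p:ℝ) ≤ r*(p:ℝ) := by
      rw [div_le_iff₀ hppos]
      calc x = r*(x/r) := by field_simp
        _ ≤ r*((p:ℝ)*p) := by nlinarith
        _ = r*(p:ℝ)*p := by ring
    rw [min_eq_right this]
  -- identify index sets
  have hI1 : (Finset.range (⌊Real.sqrt (x / r)⌋₊ + 1)).filter Nat.Prime
      = P.filter (fun p : ℕ => (p:ℝ) ≤ Real.sqrt (x/r)) := by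
    have hmono : ⌊Real.sqrt (x/r)⌋₊ ≤ ⌊Real.sqrt x⌋₊ :=
      Nat.floor_le_floor (Real.sqrt_le_sqrt (div_le_self hx.le hr.le))
    ext q
    simp only [hPdef, Finset.mem_filter, Finset.mem_range, Nat.lt_succ_iff,
      Nat.le_floor_iff (Real.sqrt_nonneg _)]
    constructor
    · rintro ⟨h1, h2⟩
      exact ⟨⟨le_trans h1 (Real.sqrt_le_sqrt (div_le_self hx.le hr.le)), h2⟩, h1⟩
    · rintro ⟨⟨_, h2⟩, h3⟩
      exact ⟨h3, h2⟩
  have hI2 : (Finset.range (⌊Real.sqrt x⌋₊ + 1)).filter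
        (fun p => Nat.Prime p ∧ Real.sqrt (x / r) < (p:ℝ))
      = P.filter (fun p : ℕ => ¬ (p:ℝ) ≤ Real.sqrt (x/r)) := by
    rw [hPdef, Finset.filter_filter]
    simp only [not_le]
  rw [Finset.sum_congr rfl hle1, Finset.sum_congr rfl hle2] at hsplit
  rw [hI1, hI2, ← hsplit]
  ring
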